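/- arXiv:1008.1661 — 3 statements merged into one kernel-verified Lean document; each statement's English description precedes it below -/
import Mathlib

section
/- Reversal lower bound witness: let m ≥ 4 and, over the alphabet {a,b,c,d}, let L = { d a^{k(m-3)} x : k ≥ 0, x ∈ b* ∪ c* } (the language of the regular expression d(a^{m-3})*(b* + c*)). Then L is suffix-free, NSC(L) ≤ m, and NSC(L^R) = m + 1, i.e., every NFA accepting the reversal L^R has at least m + 1 states and some NFA with m + 1 states accepts L^R. -/
open Computability

/-- A nondeterministic finite automaton with a single start state and
no ε-transitions. -/
structure SNFA (α : Type) (σ : Type) where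
  step : σ → α → Set σ
  start : σ
  accept : Set σ

namespace SNFA

variable {α σ : Type}

/-- The set of states reachable from some state in `S` by one transition on `a`. -/
def stepSet (M : SNFA α σ) (S : Set σ) (a : α) : Set σ :=
  ⋃ s ∈ S, M.step s a

/-- The set of states reachable from the set `S` of states by reading the word `w`. -/
def evalFrom (M : SNFA α σ) (S : Set σ) (w : List α) : Set σ :=
  w.foldl M.stepSet S

/-- The language accepted by `M`: all words spelled out by a path
from the start state to an accepting state. -/
def accepts (M : SNFA α σ) : Language α :=
  {w | ∃ q ∈ M.accept, q ∈ M.evalFrom {M.start} w}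

end SNFA

/-- A language is suffix-free if no word of the language is a proper suffix
of another word of the language. -/
def SuffixFree {α : Type} (L : Language α) : Prop :=
  ∀ u v : List α, u ∈ L → v ∈ L → u <:+ v → u = v

/-- `NSCle L k`: there is an NFA with at most `k` states accepting `L`
(so the nondeterministic state complexity of `L` is at most `k`). -/
def NSCle {α : Type} (L : Language α) (k : ℕ) : Prop :=
  ∃ (σ : Type) (x : Fintype σ) (M : SNFA α σ), M.accepts = L ∧ @Fintype.card σ x ≤ k

/-- `NSCge L k`: every NFA accepting `L` has at least `k` states
(so the nondeterministic state complexity of `L` is at least `k`). -/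
def NSCge {α : Type} (L : Language α) (k : ℕ) : Prop :=
  ∀ (σ : Type) [Fintype σ] (M : SNFA α σ), M.accepts = L → k ≤ Fintype.card σ

/-- `NSCeq L m`: the nondeterministic state complexity of `L` is exactly `m`:
some NFA with `m` states accepts `L` and every NFA accepting `L` has at least
`m` states. -/
def NSCeq {α : Type} (L : Language α) (m : ℕ) : Prop :=
  NSCle L m ∧ NSCge L m

/-- The reversal of a language: `L^R = { w^R : w ∈ L }`. -/
def revLang {α : Type} (L : Language α) : Language α :=
  {w | w.reverse ∈ L}

/-- The language `d(a^{m-3})*(b* + c*)` over `{a, b, c, d}` (encoded as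
`a = 0`, `b = 1`, `c = 2`, `d = 3` in `Fin 4`). -/
def revWitness (m : ℕ) : Language (Fin 4) :=
  {w | ∃ k j : ℕ,
        w = 3 :: (List.replicate (k * (m - 3)) 0 ++ List.replicate j 1) ∨
        w = 3 :: (List.replicate (k * (m - 3)) 0 ++ List.replicate j 2)}




namespace RevAux

open List SNFA

variable {α σ : Type}

theorem evalFrom_nil (M : SNFA α σ) (S : Set σ) : M.evalFrom S [] = S := rfl

theorem evalFrom_cons (M : SNFA α σ) (S : Set σ) (a : α) (w : List α) :
    M.evalFrom S (a :: w) = M.evalFrom (M.stepSet S a) w := rfl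

theorem evalFrom_append (M : SNFA α σ) (S : Set σ) (x y : List α) :
    M.evalFrom S (x ++ y) = M.evalFrom (M.evalFrom S x) y := by
  simp [SNFA.evalFrom, List.foldl_append]

theorem mem_stepSet {M : SNFA α σ} {S : Set σ} {a : α} {q : σ} :
    q ∈ M.stepSet S a ↔ ∃ p ∈ S, q ∈ M.step p a := by
  simp [SNFA.stepSet]

theorem evalFrom_biUnion (M : SNFA α σ) (S : Set σ) (w : List α) :
    M.evalFrom S w = ⋃ q ∈ S, M.evalFrom {q} w := by
  induction w generalizing S with
  | nil => simp [evalFrom_nil]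
  | cons a w ih =>
      rw [evalFrom_cons, ih]
      ext r
      simp only [Set.mem_iUnion, evalFrom_cons]
      constructor
      · rintro ⟨q, hq, hr⟩
        rcases mem_stepSet.1 hq with ⟨p, hp, hq⟩
        refine ⟨p, hp, ?_⟩
        rw [ih]
        exact Set.mem_biUnion (mem_stepSet.2 ⟨p, rfl, hq⟩) hr
      · rintro ⟨p, hp, hr⟩
        rw [ih] at hr
        rcases Set.mem_iUnion₂.1 hr with ⟨q, hq, hr⟩
        rcases mem_stepSet.1 hq with ⟨p', hp', hq'⟩
        cases hp'
        exact ⟨q, mem_stepSet.2 ⟨p, hp, hq'⟩, hr⟩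

theorem mem_evalFrom_append {M : SNFA α σ} {S : Set σ} {x y : List α} {r : σ} :
    r ∈ M.evalFrom S (x ++ y) ↔ ∃ q ∈ M.evalFrom S x, r ∈ M.evalFrom {q} y := by
  rw [evalFrom_append, evalFrom_biUnion]
  simp

theorem mem_accepts_append {M : SNFA α σ} {x y : List α} :
    x ++ y ∈ M.accepts ↔
      ∃ q ∈ M.evalFrom {M.start} x, ∃ f ∈ M.accept, f ∈ M.evalFrom {q} y := by
  constructor
  · rintro ⟨f, hf, hfe⟩
    rcases mem_evalFrom_append.1 hfe with ⟨q, hq, hr⟩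
    exact ⟨q, hq, f, hf, hr⟩
  · rintro ⟨q, hq, f, hf, hr⟩
    exact ⟨f, hf, mem_evalFrom_append.2 ⟨q, hq, hr⟩⟩






/-- the reversal language, parameterized by the cycle length `n` -/
def Lrev (n : ℕ) : Language (Fin 4) :=
  {w | ∃ (x : Fin 4) (j k : ℕ), (x = 1 ∨ x = 2) ∧
        w = replicate j x ++ (replicate (k * n) (0 : Fin 4) ++ [3]) }

theorem revLang_revWitness (m : ℕ) :
    revLang (revWitness m) = Lrev (m - 3) := by
  ext w
  constructor
  · rintro ⟨k, j, h | h⟩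
    · refine ⟨1, j, k, Or.inl rfl, ?_⟩
      have := congrArg List.reverse h
      simpa using this
    · refine ⟨2, j, k, Or.inr rfl, ?_⟩
      have := congrArg List.reverse h
      simpa using this
  · rintro ⟨x, j, k, hx | hx, h⟩ <;> subst hx <;>
      refine ⟨k, j, ?_⟩
    · left
      have := congrArg List.reverse h
      simpa using this
    · right
      have := congrArg List.reverse h
      simpa using this

theorem mem_Lrev_of {n : ℕ} {x : Fin 4} (hx : x = 1 ∨ x = 2) (j t : ℕ) (ht : n ∣ t) :
    replicate j x ++ (replicate t (0 : Fin 4) ++ [3]) ∈ Lrev n := by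
  rcases ht with ⟨k, rfl⟩
  exact ⟨x, j, k, hx, by rw [Nat.mul_comm]⟩

theorem three_mem {n : ℕ} {w : List (Fin 4)} (h : w ∈ Lrev n) : (3 : Fin 4) ∈ w := by
  rcases h with ⟨x, j, k, _, rfl⟩
  simp

theorem not_mem_BC {n : ℕ} {w : List (Fin 4)} (h1 : (1 : Fin 4) ∈ w)
    (h2 : (2 : Fin 4) ∈ w) : w ∉ Lrev n := by
  rintro ⟨x, j, k, hx, rfl⟩
  have e1 : (1 : Fin 4) = x ∨ (1 : Fin 4) = 0 ∨ (1 : Fin 4) = 3 := by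
    simp only [List.mem_append, List.mem_replicate, List.mem_singleton] at h1; tauto
  have e2 : (2 : Fin 4) = x ∨ (2 : Fin 4) = 0 ∨ (2 : Fin 4) = 3 := by
    simp only [List.mem_append, List.mem_replicate, List.mem_singleton] at h2; tauto
  rcases hx with rfl | rfl
  · rcases e2 with h | h | h <;> exact absurd h (by decide)
  · rcases e1 with h | h | h <;> exact absurd h (by decide)

theorem NM1 {n : ℕ} {x : Fin 4} (hx : x = 1 ∨ x = 2) (j : ℕ) {t : ℕ} (ht : ¬ n ∣ t) :
    replicate j x ++ (replicate t (0 : Fin 4) ++ [3]) ∉ Lrev n := by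
  rintro ⟨y, j', k, hy, heq⟩
  have hc := congrArg (List.count (0 : Fin 4)) heq
  have hx0 : x ≠ 0 := by rcases hx with rfl | rfl <;> decide
  have hy0 : y ≠ 0 := by rcases hy with rfl | rfl <;> decide
  simp only [List.count_append, List.count_replicate, List.count_singleton,
    beq_iff_eq, if_pos, if_neg, hx0, hy0] at hc
  norm_num [hx0, hy0] at hc
  exact ht ⟨k, by rw [Nat.mul_comm]; omega⟩

theorem not_dvd_between {n t : ℕ} (h0 : 0 < t) (h2 : t < 2 * n) (hne : t ≠ n) :
    ¬ n ∣ t := by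
  rintro ⟨k, rfl⟩
  match k with
  | 0 => simp at h0
  | 1 => simp at hne
  | (k' + 2) =>
      have : 2 * n ≤ n * (k' + 2) := by nlinarith
      omega

theorem NM_x0x {n : ℕ} {x : Fin 4} (hx : x = 1 ∨ x = 2) {i : ℕ} (hi : 0 < i)
    (l : List (Fin 4)) :
    x :: (replicate i (0 : Fin 4) ++ x :: l) ∉ Lrev n := by
  rintro ⟨y, j, k, hy, heq⟩
  have hx0 : x ≠ 0 ∧ x ≠ 3 := by rcases hx with rfl | rfl <;> exact ⟨by decide, by decide⟩
  cases j with
  | zero =>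
      simp only [List.replicate_zero, List.nil_append] at heq
      have : x ∈ replicate (k * n) (0 : Fin 4) ++ [3] := by
        rw [← heq]; exact List.mem_cons_self
      simp only [List.mem_append, List.mem_replicate, List.mem_singleton] at this
      rcases this with ⟨-, h⟩ | h
      · exact hx0.1 h
      · exact hx0.2 h
  | succ j' =>
      rw [List.replicate_succ] at heq
      simp only [List.cons_append, List.cons.injEq] at heq
      obtain ⟨rfl, heq⟩ := heq
      obtain ⟨i', rfl⟩ : ∃ i', i = i' + 1 := ⟨i - 1, by omega⟩
      rw [List.replicate_succ] at heq
      cases j' with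
      | zero =>
          simp only [List.replicate_zero, List.nil_append, List.cons_append] at heq
          have : x ∈ replicate (k * n) (0 : Fin 4) ++ [3] := by
            rw [← heq]
            exact List.mem_cons_of_mem _ (List.mem_append_right _ List.mem_cons_self)
          simp only [List.mem_append, List.mem_replicate, List.mem_singleton] at this
          rcases this with ⟨-, h⟩ | h
          · exact hx0.1 h
          · exact hx0.2 h
      | succ j'' =>
          rw [List.replicate_succ] at heq
          simp only [List.cons_append, List.cons.injEq] at heq
          exact hx0.1 heq.1.symm

/-! ### The NFA for `revWitness` itself, with `n + 3` states -/

def nxt {n : ℕ} (c : Fin n) : Fin n := ⟨(c.val + 1) % n, Nat.mod_lt _ c.pos⟩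

abbrev St1 (n : ℕ) : Type := (Unit ⊕ Fin n) ⊕ Bool

def M1 (n : ℕ) (hn : 0 < n) : SNFA (Fin 4) (St1 n) where
  step q a :=
    match q with
    | .inl (.inl _) => if a = 3 then {.inl (.inr ⟨0, hn⟩)} else ∅
    | .inl (.inr c) =>
        if a = 0 then {.inl (.inr (nxt c))}
        else if a = 1 ∧ c.val = 0 then {.inr true}
        else if a = 2 ∧ c.val = 0 then {.inr false}
        else ∅
    | .inr true => if a = 1 then {.inr true} else ∅
    | .inr false => if a = 2 then {.inr false} else ∅
  start := .inl (.inl ())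
  accept := {q | q = .inl (.inr ⟨0, hn⟩) ∨ q = .inr true ∨ q = .inr false}

def Inv1 (n : ℕ) (q : St1 n) (w : List (Fin 4)) : Prop :=
  match q with
  | .inl (.inl _) => w = []
  | .inl (.inr c) => ∃ t, w = 3 :: replicate t (0 : Fin 4) ∧ t % n = c.val
  | .inr true => ∃ t j, w = 3 :: (replicate t (0 : Fin 4) ++ replicate j (1 : Fin 4))
      ∧ n ∣ t ∧ 0 < j
  | .inr false => ∃ t j, w = 3 :: (replicate t (0 : Fin 4) ++ replicate j (2 : Fin 4))
      ∧ n ∣ t ∧ 0 < j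

theorem inv1 (n : ℕ) (hn : 0 < n) :
    ∀ (w : List (Fin 4)) (q : St1 n),
      q ∈ (M1 n hn).evalFrom {(M1 n hn).start} w ↔ Inv1 n q w := by
  intro w
  induction w using List.reverseRecOn with
  | nil =>
      intro q
      rw [evalFrom_nil]
      constructor
      · rintro rfl
        rfl
      · intro h
        rcases q with (⟨⟩ | c) | b
        · rfl
        · rcases h with ⟨t, ht, -⟩
          exact absurd ht (by simp [Inv1])
        · rcases b with _ | _ <;> · rcases h with ⟨t, j, ht, -⟩; exact absurd ht (by simp)
  | append_singleton w a ih =>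
      intro q
      rw [evalFrom_append]
      have hmem : q ∈ (M1 n hn).evalFrom ((M1 n hn).evalFrom {(M1 n hn).start} w) [a]
          ↔ ∃ p, Inv1 n p w ∧ q ∈ (M1 n hn).step p a := by
        show q ∈ (M1 n hn).stepSet _ a ↔ _
        rw [mem_stepSet]
        exact exists_congr fun p => and_congr_left fun _ => ih p
      rw [hmem]
      constructor
      · -- forward: transitions preserve the invariant
        rintro ⟨p, hp, hq⟩
        rcases p with (⟨⟩ | c) | b
        · -- from start
          simp only [Inv1] at hp
          subst hp
          simp only [M1] at hq
          split_ifs at hq with h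
          · subst h
            cases hq
            exact ⟨0, rfl, by simp⟩
          · exact absurd hq (by simp)
        · -- from a cycle state
          obtain ⟨t, rfl, htc⟩ := hp
          simp only [M1] at hq
          split_ifs at hq with h1 h2 h3
          · subst h1
            cases hq
            exact ⟨t + 1, by simp [List.replicate_succ'], by simp [nxt, ← htc, Nat.add_mod]⟩
          · obtain ⟨rfl, hc0⟩ := h2
            cases hq
            refine ⟨t, 1, by simp [List.replicate_succ'], ?_, one_pos⟩
            exact Nat.dvd_of_mod_eq_zero (by omega)
          · obtain ⟨rfl, hc0⟩ := h3
            cases hq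
            refine ⟨t, 1, by simp [List.replicate_succ'], ?_, one_pos⟩
            exact Nat.dvd_of_mod_eq_zero (by omega)
          · exact absurd hq (by simp)
        · rcases b with _ | _
          · -- from qc (false)
            obtain ⟨t, j, rfl, hdvd, hj⟩ := hp
            simp only [M1] at hq
            split_ifs at hq with h
            · subst h
              cases hq
              exact ⟨t, j + 1, by simp [List.replicate_succ'], hdvd, by omega⟩
            · exact absurd hq (by simp)
          · -- from qb (true)
            obtain ⟨t, j, rfl, hdvd, hj⟩ := hp
            simp only [M1] at hq
            split_ifs at hq with h
            · subst h
              cases hq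
              exact ⟨t, j + 1, by simp [List.replicate_succ'], hdvd, by omega⟩
            · exact absurd hq (by simp)
      · -- backward
        intro h
        rcases q with (⟨⟩ | c) | b
        · exact absurd h (by simp [Inv1])
        · obtain ⟨t, heq, htc⟩ := h
          cases t with
          | zero =>
              have : w ++ [a] = [] ++ [(3 : Fin 4)] := by simpa using heq
              obtain ⟨rfl, ha⟩ := List.append_inj' this rfl
              cases ha
              refine ⟨.inl (.inl ()), rfl, ?_⟩
              simp only [M1, if_pos rfl]
              have : c = ⟨0, hn⟩ := Fin.ext (by simpa using htc.symm)
              rw [this]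
              rfl
          | succ t' =>
              rw [List.replicate_succ', ← List.cons_append] at heq
              obtain ⟨rfl, ha⟩ := List.append_inj' heq rfl
              cases ha
              refine ⟨.inl (.inr ⟨t' % n, Nat.mod_lt _ hn⟩), ⟨t', rfl, rfl⟩, ?_⟩
              simp only [M1, if_pos rfl]
              have : nxt (⟨t' % n, Nat.mod_lt _ hn⟩ : Fin n) = c := by
                apply Fin.ext
                simp [nxt, Nat.add_mod, ← htc]
              rw [this]
              rfl
        · rcases b with _ | _
          · -- to qc
            obtain ⟨t, j, heq, hdvd, hj⟩ := h
            obtain ⟨j', rfl⟩ : ∃ j', j = j' + 1 := ⟨j - 1, by omega⟩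
            rw [List.replicate_succ' (n := j'), ← List.append_assoc, ← List.cons_append] at heq
            obtain ⟨rfl, ha⟩ := List.append_inj' heq rfl
            cases ha
            cases j' with
            | zero =>
                have htn : t % n = 0 := by rcases hdvd with ⟨u, rfl⟩; simp [Nat.mul_mod_right]
                refine ⟨.inl (.inr ⟨0, hn⟩), ⟨t, by simp, htn⟩, ?_⟩
                simp [M1]
            | succ j'' =>
                exact ⟨.inr false, ⟨t, j'' + 1, rfl, hdvd, by omega⟩,
                  by simp only [M1, if_pos rfl]; rfl⟩
          · -- to qb
            obtain ⟨t, j, heq, hdvd, hj⟩ := h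
            obtain ⟨j', rfl⟩ : ∃ j', j = j' + 1 := ⟨j - 1, by omega⟩
            rw [List.replicate_succ' (n := j'), ← List.append_assoc, ← List.cons_append] at heq
            obtain ⟨rfl, ha⟩ := List.append_inj' heq rfl
            cases ha
            cases j' with
            | zero =>
                have htn : t % n = 0 := by rcases hdvd with ⟨u, rfl⟩; simp [Nat.mul_mod_right]
                refine ⟨.inl (.inr ⟨0, hn⟩), ⟨t, by simp, htn⟩, ?_⟩
                simp [M1]
            | succ j'' =>
                exact ⟨.inr true, ⟨t, j'' + 1, rfl, hdvd, by omega⟩,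
                  by simp only [M1, if_pos rfl]; rfl⟩


theorem M1_accepts (n : ℕ) (hn : 0 < n) :
    (M1 n hn).accepts = {w | ∃ k j : ℕ,
        w = 3 :: (replicate (k * n) (0 : Fin 4) ++ replicate j (1 : Fin 4)) ∨
        w = 3 :: (replicate (k * n) (0 : Fin 4) ++ replicate j (2 : Fin 4))} := by
  ext w
  constructor
  · rintro ⟨q, hacc, hq⟩
    rw [inv1] at hq
    rcases hacc with rfl | rfl | rfl
    · obtain ⟨t, rfl, htn⟩ := hq
      obtain ⟨u, rfl⟩ : n ∣ t := Nat.dvd_of_mod_eq_zero htn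
      exact ⟨u, 0, Or.inl (by simp [Nat.mul_comm])⟩
    · obtain ⟨t, j, rfl, ⟨u, rfl⟩, hj⟩ := hq
      exact ⟨u, j, Or.inl (by simp [Nat.mul_comm])⟩
    · obtain ⟨t, j, rfl, ⟨u, rfl⟩, hj⟩ := hq
      exact ⟨u, j, Or.inr (by simp [Nat.mul_comm])⟩
  · rintro ⟨k, j, rfl | rfl⟩
    · cases j with
      | zero =>
          refine ⟨.inl (.inr ⟨0, hn⟩), Or.inl rfl, ?_⟩
          rw [inv1]
          exact ⟨k * n, by simp, by simp [Nat.mul_mod_left]⟩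
      | succ j' =>
          refine ⟨.inr true, Or.inr (Or.inl rfl), ?_⟩
          rw [inv1]
          exact ⟨k * n, j' + 1, rfl, ⟨k, Nat.mul_comm k n⟩, by omega⟩
    · cases j with
      | zero =>
          refine ⟨.inl (.inr ⟨0, hn⟩), Or.inl rfl, ?_⟩
          rw [inv1]
          exact ⟨k * n, by simp, by simp [Nat.mul_mod_left]⟩
      | succ j' =>
          refine ⟨.inr false, Or.inr (Or.inr rfl), ?_⟩
          rw [inv1]
          exact ⟨k * n, j' + 1, rfl, ⟨k, Nat.mul_comm k n⟩, by omega⟩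

theorem suffixFree_revWitness (m : ℕ) : SuffixFree (revWitness m) := by
  have key : ∀ (x : Fin 4), x = 1 ∨ x = 2 → ∀ t j : ℕ,
      (3 : Fin 4) ∉ replicate t (0 : Fin 4) ++ replicate j x := by
    intro x hx t j h
    simp only [List.mem_append, List.mem_replicate] at h
    rcases hx with rfl | rfl <;> rcases h with ⟨-, h⟩ | ⟨-, h⟩ <;> exact absurd h (by decide)
  rintro u v hu hv ⟨p, rfl⟩
  cases p with
  | nil => simp
  | cons y p' =>
      exfalso
      obtain ⟨k, j, hu⟩ := hu
      obtain ⟨k', j', hv⟩ := hv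
      have hx : ∃ x : Fin 4, (x = 1 ∨ x = 2) ∧
          u = 3 :: (replicate (k * (m - 3)) (0 : Fin 4) ++ replicate j x) := by
        rcases hu with h | h
        exacts [⟨1, Or.inl rfl, h⟩, ⟨2, Or.inr rfl, h⟩]
      have hy : ∃ x' : Fin 4, (x' = 1 ∨ x' = 2) ∧ y :: (p' ++ u) =
          3 :: (replicate (k' * (m - 3)) (0 : Fin 4) ++ replicate j' x') := by
        rcases hv with h | h
        · exact ⟨1, Or.inl rfl, by simpa using h⟩
        · exact ⟨2, Or.inr rfl, by simpa using h⟩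
      obtain ⟨x, hx1, rfl⟩ := hx
      obtain ⟨x', hx1', hv'⟩ := hy
      have htl := (List.cons_eq_cons.1 hv').2
      have h3 : (3 : Fin 4) ∈ p' ++ 3 :: (replicate (k * (m - 3)) (0 : Fin 4) ++ replicate j x) :=
        List.mem_append_right _ List.mem_cons_self
      rw [htl] at h3
      exact key x' hx1' _ _ h3

/-! ### The NFA for the reversal `Lrev n`, with `n + 4` states -/

abbrev St2 (n : ℕ) : Type := (Unit ⊕ Bool) ⊕ (Fin n ⊕ Unit)

def M2 (n : ℕ) (hn : 0 < n) : SNFA (Fin 4) (St2 n) where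
  step q a :=
    match q with
    | .inl (.inl _) =>
        if a = 1 then {.inl (.inr true)}
        else if a = 2 then {.inl (.inr false)}
        else if a = 0 then {.inr (.inl ⟨1 % n, Nat.mod_lt _ hn⟩)}
        else {.inr (.inr ())}
    | .inl (.inr true) =>
        if a = 1 then {.inl (.inr true)}
        else if a = 0 then {.inr (.inl ⟨1 % n, Nat.mod_lt _ hn⟩)}
        else if a = 3 then {.inr (.inr ())}
        else ∅
    | .inl (.inr false) =>
        if a = 2 then {.inl (.inr false)}
        else if a = 0 then {.inr (.inl ⟨1 % n, Nat.mod_lt _ hn⟩)}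
        else if a = 3 then {.inr (.inr ())}
        else ∅
    | .inr (.inl c) =>
        if a = 0 then {.inr (.inl (nxt c))}
        else if a = 3 ∧ c.val = 0 then {.inr (.inr ())}
        else ∅
    | .inr (.inr _) => ∅
  start := .inl (.inl ())
  accept := {q | q = .inr (.inr ())}

def Inv2 (n : ℕ) (q : St2 n) (w : List (Fin 4)) : Prop :=
  match q with
  | .inl (.inl _) => w = []
  | .inl (.inr true) => ∃ j, w = replicate (j + 1) (1 : Fin 4)
  | .inl (.inr false) => ∃ j, w = replicate (j + 1) (2 : Fin 4)
  | .inr (.inl c) => ∃ (x : Fin 4) (j t : ℕ), (x = 1 ∨ x = 2) ∧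
      w = replicate j x ++ replicate (t + 1) (0 : Fin 4) ∧ (t + 1) % n = c.val
  | .inr (.inr _) => w ∈ Lrev n

theorem inv2 (n : ℕ) (hn : 0 < n) :
    ∀ (w : List (Fin 4)) (q : St2 n),
      q ∈ (M2 n hn).evalFrom {(M2 n hn).start} w ↔ Inv2 n q w := by
  intro w
  induction w using List.reverseRecOn with
  | nil =>
      intro q
      rw [evalFrom_nil]
      constructor
      · rintro rfl
        rfl
      · intro h
        rcases q with (⟨⟩ | b) | (c | ⟨⟩)
        · rfl
        · rcases b with _ | _ <;>
          · obtain ⟨j, hj⟩ := h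
            exact absurd hj (by simp [List.replicate_succ])
        · obtain ⟨x, j, t, -, hj, -⟩ := h
          have := congrArg List.length hj
          simp at this
        · exact absurd ((three_mem h)) (by simp)
  | append_singleton w a ih =>
      intro q
      rw [evalFrom_append]
      have hmem : q ∈ (M2 n hn).evalFrom ((M2 n hn).evalFrom {(M2 n hn).start} w) [a]
          ↔ ∃ p, Inv2 n p w ∧ q ∈ (M2 n hn).step p a := by
        show q ∈ (M2 n hn).stepSet _ a ↔ _
        rw [mem_stepSet]
        exact exists_congr fun p => and_congr_left fun _ => ih p
      rw [hmem]
      constructor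
      · rintro ⟨p, hp, hq⟩
        rcases p with (⟨⟩ | b) | (c | ⟨⟩)
        · -- from start
          simp only [Inv2] at hp
          subst hp
          simp only [M2] at hq
          split_ifs at hq with h1 h2 h3
          · subst h1; cases hq; exact ⟨0, rfl⟩
          · subst h2; cases hq; exact ⟨0, rfl⟩
          · subst h3
            cases hq
            exact ⟨1, 0, 0, Or.inl rfl, by simp, rfl⟩
          · have : a = 3 := by fin_cases a <;> simp_all
            subst this
            cases hq
            simpa [Inv2] using mem_Lrev_of (n := n) (Or.inl rfl) 0 0 (dvd_zero n)
        · rcases b with _ | _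
          · -- from C (false)
            obtain ⟨j, rfl⟩ := hp
            simp only [M2] at hq
            split_ifs at hq with h1 h2 h3
            · subst h1; cases hq
              exact ⟨j + 1, by rw [← List.replicate_succ']⟩
            · subst h2; cases hq
              exact ⟨2, j + 1, 0, Or.inr rfl, by simp, rfl⟩
            · subst h3; cases hq
              simpa [Inv2] using mem_Lrev_of (n := n) (Or.inr rfl) (j + 1) 0 (dvd_zero n)
            · exact absurd hq (by simp)
          · -- from B (true)
            obtain ⟨j, rfl⟩ := hp
            simp only [M2] at hq
            split_ifs at hq with h1 h2 h3
            · subst h1; cases hq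
              exact ⟨j + 1, by rw [← List.replicate_succ']⟩
            · subst h2; cases hq
              exact ⟨1, j + 1, 0, Or.inl rfl, by simp, rfl⟩
            · subst h3; cases hq
              simpa [Inv2] using mem_Lrev_of (n := n) (Or.inl rfl) (j + 1) 0 (dvd_zero n)
            · exact absurd hq (by simp)
        · -- from a cycle state
          obtain ⟨x, j, t, hx, rfl, htc⟩ := hp
          simp only [M2] at hq
          split_ifs at hq with h1 h2
          · subst h1; cases hq
            refine ⟨x, j, t + 1, hx, by simp [List.replicate_succ'], ?_⟩
            simp [nxt, ← htc, Nat.add_mod]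
          · obtain ⟨rfl, hc0⟩ := h2
            cases hq
            have : n ∣ t + 1 := Nat.dvd_of_mod_eq_zero (by omega)
            simpa [Inv2, List.append_assoc] using mem_Lrev_of hx j (t + 1) this
          · exact absurd hq (by simp)
        · exact absurd hq (by simp [M2])
      · intro h
        rcases q with (⟨⟩ | b) | (c | ⟨⟩)
        · exact absurd h (by simp [Inv2])
        · rcases b with _ | _
          · -- to C
            obtain ⟨j, heq⟩ := h
            rw [List.replicate_succ'] at heq
            obtain ⟨rfl, ha⟩ := List.append_inj' heq rfl
            cases ha
            cases j with
            | zero =>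
                exact ⟨.inl (.inl ()), rfl, by simp [M2]⟩
            | succ j' =>
                exact ⟨.inl (.inr false), ⟨j', rfl⟩, by simp [M2]⟩
          · -- to B
            obtain ⟨j, heq⟩ := h
            rw [List.replicate_succ'] at heq
            obtain ⟨rfl, ha⟩ := List.append_inj' heq rfl
            cases ha
            cases j with
            | zero =>
                exact ⟨.inl (.inl ()), rfl, by simp [M2]⟩
            | succ j' =>
                exact ⟨.inl (.inr true), ⟨j', rfl⟩, by simp [M2]⟩
        · -- to a cycle state
          obtain ⟨x, j, t, hx, heq, htc⟩ := h
          rw [List.replicate_succ', ← List.append_assoc] at heq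
          obtain ⟨rfl, ha⟩ := List.append_inj' heq rfl
          cases ha
          cases t with
          | succ t' =>
              refine ⟨.inr (.inl ⟨(t' + 1) % n, Nat.mod_lt _ hn⟩),
                ⟨x, j, t', hx, rfl, rfl⟩, ?_⟩
              simp only [M2, if_pos rfl]
              have : nxt (⟨(t' + 1) % n, Nat.mod_lt _ hn⟩ : Fin n) = c := by
                apply Fin.ext
                simp [nxt, Nat.add_mod, ← htc]
              rw [this]
              rfl
          | zero =>
              have hc : c = ⟨1 % n, Nat.mod_lt _ hn⟩ := Fin.ext (by simp [← htc])
              subst hc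
              simp only [List.replicate_zero, List.append_nil] at *
              cases j with
              | zero =>
                  exact ⟨.inl (.inl ()), rfl, by simp [M2]⟩
              | succ j' =>
                  rcases hx with rfl | rfl
                  · exact ⟨.inl (.inr true), ⟨j', rfl⟩, by simp [M2]⟩
                  · exact ⟨.inl (.inr false), ⟨j', rfl⟩, by simp [M2]⟩
        · -- to the final state
          obtain ⟨x, j, k, hx, heq⟩ := h
          rw [← List.append_assoc] at heq
          obtain ⟨rfl, ha⟩ := List.append_inj' heq rfl
          cases ha
          rcases Nat.eq_zero_or_pos (k * n) with hk | hk
          · rw [hk] at *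
            simp only [List.replicate_zero, List.append_nil] at *
            cases j with
            | zero =>
                refine ⟨.inl (.inl ()), rfl, ?_⟩
                simp [M2]
            | succ j' =>
                rcases hx with rfl | rfl
                · exact ⟨.inl (.inr true), ⟨j', rfl⟩, by simp [M2]⟩
                · exact ⟨.inl (.inr false), ⟨j', rfl⟩, by simp [M2]⟩
          · obtain ⟨t, hT⟩ : ∃ t, k * n = t + 1 := ⟨k * n - 1, by omega⟩
            rw [hT]
            refine ⟨.inr (.inl ⟨0, hn⟩), ⟨x, j, t, hx, rfl, ?_⟩, ?_⟩
            · show (t + 1) % n = 0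
              rw [← hT]
              simp [Nat.mul_mod_left]
            · simp [M2]

theorem M2_accepts (n : ℕ) (hn : 0 < n) : (M2 n hn).accepts = Lrev n := by
  ext w
  constructor
  · rintro ⟨q, hacc, hq⟩
    rw [inv2] at hq
    rw [show q = .inr (.inr ()) from hacc] at hq
    exact hq
  · intro hw
    refine ⟨.inr (.inr ()), rfl, ?_⟩
    rw [inv2]
    exact hw

/-! ### The fooling pairs for the lower bound -/

def foolP (n : ℕ) : ℕ → List (Fin 4) × List (Fin 4)
  | 0 => ([1, 1], 1 :: (replicate n (0 : Fin 4) ++ [3]))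
  | 1 => ([2, 2], 2 :: (replicate n (0 : Fin 4) ++ [3]))
  | 2 => (2 :: replicate n (0 : Fin 4), [3])
  | (i + 3) => (1 :: replicate (i + 1) (0 : Fin 4),
      replicate (n - (i + 1)) (0 : Fin 4) ++ [3])

theorem fool_self {n : ℕ} (hn : 0 < n) : ∀ i, i < n + 2 →
    (foolP n i).1 ++ (foolP n i).2 ∈ Lrev n := by
  intro i hi
  match i with
  | 0 =>
      have := mem_Lrev_of (n := n) (Or.inl rfl) 3 n (dvd_refl n)
      simpa [foolP, List.replicate_succ] using this
  | 1 =>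
      have := mem_Lrev_of (n := n) (Or.inr rfl) 3 n (dvd_refl n)
      simpa [foolP, List.replicate_succ] using this
  | 2 =>
      have := mem_Lrev_of (n := n) (Or.inr rfl) 1 n (dvd_refl n)
      simpa [foolP, List.replicate_succ] using this
  | (i' + 3) =>
      have hrep : replicate (i' + 1) (0 : Fin 4) ++ replicate (n - (i' + 1)) (0 : Fin 4)
          = replicate n (0 : Fin 4) := by
        rw [← List.replicate_add]
        congr 1
        omega
      show (1 :: replicate (i' + 1) (0 : Fin 4)) ++
          (replicate (n - (i' + 1)) (0 : Fin 4) ++ [3]) ∈ Lrev n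
      refine ⟨1, 1, 1, Or.inl rfl, ?_⟩
      simp only [List.replicate_one, one_mul, List.cons_append, List.nil_append]
      rw [← List.append_assoc, hrep]

theorem fool_fst_not_mem {n : ℕ} : ∀ i, i < n + 2 → (foolP n i).1 ∉ Lrev n := by
  intro i hi h
  have h3 := three_mem h
  match i with
  | 0 => simp [foolP] at h3
  | 1 => simp [foolP] at h3
  | 2 =>
      simp only [foolP, List.mem_cons, List.mem_replicate] at h3
      rcases h3 with h3 | ⟨-, h3⟩ <;> exact absurd h3 (by decide)
  | (i' + 3) =>
      simp only [foolP, List.mem_cons, List.mem_replicate] at h3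
      rcases h3 with h3 | ⟨-, h3⟩ <;> exact absurd h3 (by decide)

theorem fool_sep {n : ℕ} (hn : 0 < n) : ∀ i, i < n + 2 →
    ∃ v, v ∈ Lrev n ∧ (foolP n i).1 ++ v ∉ Lrev n := by
  intro i hi
  match i with
  | 0 =>
      refine ⟨[2, 3], ⟨2, 1, 0, Or.inr rfl, by simp [List.replicate_succ]⟩, ?_⟩
      refine not_mem_BC ?_ ?_ <;> simp [foolP]
  | 1 =>
      refine ⟨[1, 3], ⟨1, 1, 0, Or.inl rfl, by simp [List.replicate_succ]⟩, ?_⟩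
      refine not_mem_BC ?_ ?_ <;> simp [foolP]
  | 2 =>
      refine ⟨[1, 3], ⟨1, 1, 0, Or.inl rfl, by simp [List.replicate_succ]⟩, ?_⟩
      refine not_mem_BC ?_ ?_
      · simp [foolP]
      · simp [foolP]
  | (i' + 3) =>
      refine ⟨[3], ⟨1, 0, 0, Or.inl rfl, by simp⟩, ?_⟩
      have hnd : ¬ n ∣ (i' + 1) := not_dvd_between (by omega) (by omega) (by omega)
      have := NM1 (n := n) (Or.inl rfl) 1 hnd
      simpa [foolP, List.replicate_succ] using this

theorem fool_cross_lt {n : ℕ} (hn : 0 < n) : ∀ i j, i < j → j < n + 2 →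
    (foolP n i).1 ++ (foolP n j).2 ∉ Lrev n ∨ (foolP n j).1 ++ (foolP n i).2 ∉ Lrev n := by
  intro i j hij hj
  match i, j with
  | 0, 1 =>
      left
      exact not_mem_BC (by simp [foolP]) (by simp [foolP])
  | 0, 2 =>
      right
      exact not_mem_BC (by simp [foolP]) (by simp [foolP])
  | 1, 2 =>
      right
      have := NM_x0x (n := n) (Or.inr rfl) hn (replicate n (0 : Fin 4) ++ [3])
      simpa [foolP] using this
  | 0, (j' + 3) =>
      right
      have := NM_x0x (n := n) (Or.inl rfl) (Nat.succ_pos j') (replicate n (0 : Fin 4) ++ [3])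
      simpa [foolP] using this
  | 1, (j' + 3) =>
      left
      have hnd : ¬ n ∣ (n - (j' + 1)) := not_dvd_between (by omega) (by omega) (by omega)
      have := NM1 (n := n) (Or.inr rfl) 2 hnd
      simpa [foolP, List.replicate_succ] using this
  | 2, (j' + 3) =>
      left
      have hnd : ¬ n ∣ (n + (n - (j' + 1))) := not_dvd_between (by omega) (by omega) (by omega)
      intro h
      refine NM1 (n := n) (Or.inr rfl) 1 hnd ?_
      rw [List.replicate_add, List.replicate_one, List.append_assoc]
      simpa [foolP, List.append_assoc] using h
  | (i' + 3), (j' + 3) =>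
      left
      have hnd : ¬ n ∣ ((i' + 1) + (n - (j' + 1))) :=
        not_dvd_between (by omega) (by omega) (by omega)
      intro h
      refine NM1 (n := n) (Or.inl rfl) 1 hnd ?_
      rw [List.replicate_add, List.replicate_one, List.append_assoc]
      simpa [foolP, List.append_assoc] using h

theorem fool_cross {n : ℕ} (hn : 0 < n) : ∀ i j, i < n + 2 → j < n + 2 → i ≠ j →
    (foolP n i).1 ++ (foolP n j).2 ∉ Lrev n ∨ (foolP n j).1 ++ (foolP n i).2 ∉ Lrev n := by
  intro i j hi hj hne
  rcases Nat.lt_or_ge i j with h | h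
  · exact fool_cross_lt hn i j h hj
  · exact (fool_cross_lt hn j i (by omega) hi).symm

/-! ### The lower bound -/

theorem card_lower (n : ℕ) (hn : 0 < n) (σ : Type) [Fintype σ]
    (M : SNFA (Fin 4) σ) (hM : M.accepts = Lrev n) : n + 4 ≤ Fintype.card σ := by
  have hchoice : ∀ i : Fin (n + 2), ∃ q, q ∈ M.evalFrom {M.start} (foolP n i.val).1 ∧
      ∃ f ∈ M.accept, f ∈ M.evalFrom {q} (foolP n i.val).2 := by
    intro i
    have : (foolP n i.val).1 ++ (foolP n i.val).2 ∈ M.accepts := by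
      rw [hM]; exact fool_self hn i.val i.isLt
    exact mem_accepts_append.1 this
  choose qf hq1 hq2 using hchoice
  have hD : ([3] : List (Fin 4)) ∈ M.accepts := by
    rw [hM]; exact ⟨1, 0, 0, Or.inl rfl, by simp⟩
  obtain ⟨f1, hf1a, hf1e⟩ := hD
  have hqf_ne : ∀ i j : Fin (n + 2), i ≠ j → qf i ≠ qf j := by
    intro i j hne heq
    have c1 : (foolP n i.val).1 ++ (foolP n j.val).2 ∈ Lrev n := by
      rw [← hM]
      obtain ⟨f, hf, hfe⟩ := hq2 j
      exact mem_accepts_append.2 ⟨qf i, hq1 i, f, hf, heq ▸ hfe⟩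
    have c2 : (foolP n j.val).1 ++ (foolP n i.val).2 ∈ Lrev n := by
      rw [← hM]
      obtain ⟨f, hf, hfe⟩ := hq2 i
      exact mem_accepts_append.2 ⟨qf j, hq1 j, f, hf, heq ▸ hfe⟩
    have hvne : i.val ≠ j.val := fun h => hne (Fin.ext h)
    rcases fool_cross hn i.val j.val i.isLt j.isLt hvne with h | h
    exacts [h c1, h c2]
  have hqf_start : ∀ i : Fin (n + 2), qf i ≠ M.start := by
    intro i h
    obtain ⟨v, hv, hnv⟩ := fool_sep hn i.val i.isLt
    rw [← hM] at hv
    obtain ⟨f, hf, hfe⟩ := hv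
    apply hnv
    rw [← hM]
    exact mem_accepts_append.2 ⟨qf i, hq1 i, f, hf, h ▸ hfe⟩
  have hqf_f1 : ∀ i : Fin (n + 2), qf i ≠ f1 := by
    intro i h
    refine fool_fst_not_mem i.val i.isLt ?_
    rw [← hM]
    exact ⟨qf i, h ▸ hf1a, hq1 i⟩
  have hsf : M.start ≠ f1 := by
    intro h
    have hnil : ([] : List (Fin 4)) ∈ M.accepts := ⟨f1, hf1a, h ▸ rfl⟩
    rw [hM] at hnil
    exact absurd (three_mem hnil) (by simp)
  let g : Fin (n + 2) ⊕ Bool → σ := Sum.elim qf (fun b => if b then M.start else f1)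
  have hginj : Function.Injective g := by
    rintro (i | bi) (j | bj) h
    · have : i = j := by
        by_contra hne
        exact hqf_ne i j hne h
      rw [this]
    · exfalso
      cases bj <;> simp only [g, Sum.elim_inl, Sum.elim_inr, if_true, if_false,
        Bool.false_eq_true, if_neg, cond] at h
      · exact hqf_f1 i (by simpa using h)
      · exact hqf_start i (by simpa using h)
    · exfalso
      cases bi <;> simp only [g, Sum.elim_inl, Sum.elim_inr] at h
      · exact hqf_f1 j (by simpa using h.symm)
      · exact hqf_start j (by simpa using h.symm)
    · cases bi <;> cases bj <;> simp only [g, Sum.elim_inr] at h ⊢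
      · exact absurd (by simpa using h.symm) hsf
      · exact absurd (by simpa using h) hsf
  have := Fintype.card_le_of_injective g hginj
  simpa using this

end RevAux

/-- **Reversal, lower bound witness.** For `m ≥ 4`, the language
`L = d(a^{m-3})*(b* + c*)` over `{a, b, c, d}` is suffix-free, `NSC(L) ≤ m`,
and `NSC(L^R) = m + 1`. -/
theorem reversal_lower_witness (m : ℕ) (hm : 4 ≤ m) :
    SuffixFree (revWitness m) ∧ NSCle (revWitness m) m ∧
    NSCeq (revLang (revWitness m)) (m + 1) := by
  set n := m - 3 with hn3
  have hn : 0 < n := by omega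
  have hLrev : revLang (revWitness m) = RevAux.Lrev n := RevAux.revLang_revWitness m
  refine ⟨RevAux.suffixFree_revWitness m, ?_, ?_, ?_⟩
  · refine ⟨RevAux.St1 n, inferInstance, RevAux.M1 n hn, ?_, ?_⟩
    · rw [RevAux.M1_accepts]
      rfl
    · have hc : Fintype.card (RevAux.St1 n) = n + 3 := by
        simp only [RevAux.St1, Fintype.card_sum, Fintype.card_unit, Fintype.card_fin,
          Fintype.card_bool]
        omega
      omega
  · refine ⟨RevAux.St2 n, inferInstance, RevAux.M2 n hn, ?_, ?_⟩
    · rw [RevAux.M2_accepts, hLrev]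
    · have hc : Fintype.card (RevAux.St2 n) = n + 4 := by
        simp only [RevAux.St2, Fintype.card_sum, Fintype.card_unit, Fintype.card_fin,
          Fintype.card_bool]
        omega
      omega
  · intro σ _ M hM
    rw [hLrev] at hM
    have := RevAux.card_lower n hn σ M hM
    omega
end

section
/- Complementation upper bound: let L be a suffix-free regular language over an alphabet Σ accepted by an NFA with m states. Then NSC(Σ* \ L) ≤ 2^{m−1} + 1, i.e., there is an NFA (indeed a DFA) with at most 2^{m−1} + 1 states accepting the complement of L. -/
open Computability

namespace SNFA

variable {α σ : Type}

theorem mem_stepSet' {M : SNFA α σ} {S : Set σ} {a : α} {q : σ} :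
    q ∈ M.stepSet S a ↔ ∃ p ∈ S, q ∈ M.step p a := by
  simp [stepSet]

theorem evalFrom_append_singleton (M : SNFA α σ) (S : Set σ) (u : List α) (a : α) :
    M.evalFrom S (u ++ [a]) = M.stepSet (M.evalFrom S u) a := by
  simp [evalFrom, List.foldl_append]

/-- The pruned automaton: remove all transitions into the start state. -/
def prune (M : SNFA α σ) : SNFA α σ where
  step q a := M.step q a \ {M.start}
  start := M.start
  accept := M.accept

theorem prune_evalFrom_subset (M : SNFA α σ) :
    ∀ (w : List α) (S T : Set σ), S ⊆ T → M.prune.evalFrom S w ⊆ M.evalFrom T w := by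
  intro w
  induction w with
  | nil => intro S T h; simpa [evalFrom] using h
  | cons a w ih =>
    intro S T h
    apply ih
    intro q hq
    rw [mem_stepSet'] at hq ⊢
    obtain ⟨p, hp, hq⟩ := hq
    exact ⟨p, h hp, hq.1⟩

theorem mem_eval_revisit (M : SNFA α σ) :
    ∀ (w : List α) (q : σ), q ∈ M.evalFrom {M.start} w →
      q ∈ M.prune.evalFrom {M.start} w ∨
      ∃ v, v <:+ w ∧ v ≠ w ∧ q ∈ M.evalFrom {M.start} v := by
  intro w
  induction w using List.reverseRecOn with
  | nil => intro q hq; exact Or.inl hq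
  | append_singleton u a ih =>
    intro q hq
    rw [evalFrom_append_singleton, mem_stepSet'] at hq
    obtain ⟨p, hp, hq⟩ := hq
    by_cases hq0 : q = M.start
    · refine Or.inr ⟨[], List.nil_suffix, by simp, ?_⟩
      simp [evalFrom, hq0]
    · rcases ih p hp with h | ⟨v, hv, hvne, hpv⟩
      · left
        rw [evalFrom_append_singleton, mem_stepSet']
        exact ⟨p, h, ⟨hq, hq0⟩⟩
      · refine Or.inr ⟨v ++ [a], ?_, ?_, ?_⟩
        · obtain ⟨t, rfl⟩ := hv
          exact ⟨t, by simp⟩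
        · simpa using hvne
        · rw [evalFrom_append_singleton, mem_stepSet']
          exact ⟨p, hpv, hq⟩

theorem prune_accepts (M : SNFA α σ) (hsf : SuffixFree M.accepts) :
    M.prune.accepts = M.accepts := by
  ext w
  constructor
  · rintro ⟨q, hqa, hq⟩
    exact ⟨q, hqa, M.prune_evalFrom_subset w _ _ (subset_refl _) hq⟩
  · rintro ⟨q, hqa, hq⟩
    rcases M.mem_eval_revisit w q hq with h | ⟨v, hv, hvne, hqv⟩
    · exact ⟨q, hqa, h⟩
    · have hvL : v ∈ M.accepts := ⟨q, hqa, hqv⟩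
      exact absurd (hsf v w hvL ⟨q, hqa, hq⟩ hv) hvne

theorem start_not_mem_prune_stepSet (M : SNFA α σ) (S : Set σ) (a : α) :
    M.start ∉ M.prune.stepSet S a := by
  simp [stepSet, prune]

theorem start_not_mem_prune_eval (M : SNFA α σ) (u : List α) (a : α) :
    M.start ∉ M.prune.evalFrom {M.start} (u ++ [a]) := by
  rw [evalFrom_append_singleton]
  exact M.start_not_mem_prune_stepSet _ a

/-- View a subset of `σ` as a subset of the non-start states. -/
def down (M : SNFA α σ) (T : Set σ) : Set {q : σ // q ≠ M.start} :=
  {q | (q : σ) ∈ T}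

/-- The complement DFA built by the subset construction on the pruned NFA. -/
def comp (M : SNFA α σ) : SNFA α (Option (Set {q : σ // q ≠ M.start})) where
  step s a :=
    match s with
    | none => {some (M.down (M.prune.stepSet {M.start} a))}
    | some S => {some (M.down (M.prune.stepSet (Subtype.val '' S) a))}
  start := none
  accept := {s | match s with
    | none => M.start ∉ M.accept
    | some S => ∀ q ∈ S, (q : σ) ∉ M.accept}

theorem val_image_down (M : SNFA α σ) {T : Set σ} (hT : M.start ∉ T) :
    Subtype.val '' M.down T = T := by
  ext x
  simp only [down, Set.mem_image, Set.mem_setOf_eq, Subtype.exists, exists_and_right,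
    exists_eq_right]
  exact ⟨fun ⟨_, hx⟩ => hx, fun hx => ⟨fun h => hT (h ▸ hx), hx⟩⟩

theorem comp_eval (M : SNFA α σ) (w : List α) (hw : w ≠ []) :
    M.comp.evalFrom {none} w = {some (M.down (M.prune.evalFrom {M.start} w))} := by
  induction w using List.reverseRecOn with
  | nil => exact absurd rfl hw
  | append_singleton u a ih =>
    rcases eq_or_ne u [] with rfl | hu
    · simp only [List.nil_append, evalFrom, List.foldl_cons, List.foldl_nil]
      rw [show M.comp.stepSet {none} a = M.comp.step none a by simp [stepSet]]
      rfl
    · rw [evalFrom_append_singleton, ih hu, evalFrom_append_singleton]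
      have hstart : M.start ∉ M.prune.evalFrom {M.start} u := by
        obtain ⟨t, b, rfl⟩ := u.eq_nil_or_concat.resolve_left hu
        rw [List.concat_eq_append]
        exact M.start_not_mem_prune_eval t b
      rw [show M.comp.stepSet {some (M.down (M.prune.evalFrom {M.start} u))} a
            = M.comp.step (some (M.down (M.prune.evalFrom {M.start} u))) a by
        simp [stepSet]]
      show ({some (M.down (M.prune.stepSet
        (Subtype.val '' M.down (M.prune.evalFrom {M.start} u)) a))} : Set _) = _
      rw [M.val_image_down hstart]

theorem comp_accepts (M : SNFA α σ) (hsf : SuffixFree M.accepts) :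
    M.comp.accepts = {w | w ∉ M.accepts} := by
  ext w
  rcases eq_or_ne w [] with rfl | hw
  · have h1 : ([] : List α) ∈ M.comp.accepts ↔ M.start ∉ M.accept := by
      constructor
      · rintro ⟨s, hs, rfl⟩
        exact hs
      · intro h
        exact ⟨none, h, rfl⟩
    have h2 : ([] : List α) ∈ M.accepts ↔ M.start ∈ M.accept := by
      constructor
      · rintro ⟨q, hq, rfl⟩
        exact hq
      · intro h
        exact ⟨M.start, h, rfl⟩
    rw [h1]; show _ ↔ ([] : List α) ∉ M.accepts
    exact not_congr h2.symm
  · have hE := M.comp_eval w hw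
    have hstart : M.start ∉ M.prune.evalFrom {M.start} w := by
      obtain ⟨t, b, rfl⟩ := w.eq_nil_or_concat.resolve_left hw
      rw [List.concat_eq_append]
      exact M.start_not_mem_prune_eval t b
    have h1 : w ∈ M.comp.accepts ↔
        ∀ q ∈ M.prune.evalFrom {M.start} w, q ∉ M.accept := by
      show (∃ q ∈ M.comp.accept, q ∈ M.comp.evalFrom {none} w) ↔ _
      rw [hE]
      constructor
      · rintro ⟨s, hs, rfl⟩ q hq hqa
        rcases eq_or_ne q M.start with rfl | hq0
        · exact hstart hq
        · exact hs ⟨q, hq0⟩ hq hqa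
      · intro h
        refine ⟨some (M.down (M.prune.evalFrom {M.start} w)), ?_, rfl⟩
        intro q hq
        exact h q hq
    have h2 : w ∈ M.accepts ↔ ∃ q ∈ M.accept, q ∈ M.prune.evalFrom {M.start} w := by
      rw [← M.prune_accepts hsf]; rfl
    rw [h1]; show _ ↔ w ∉ M.accepts
    constructor
    · rintro h hL
      obtain ⟨q, hqa, hq⟩ := h2.mp hL
      exact h q hq hqa
    · intro h q hq hqa
      exact h (h2.mpr ⟨q, hqa, hq⟩)

end SNFA

/-- **Complementation, upper bound.** If a suffix-free language `L` is accepted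
by an NFA with `m` states, then some NFA with at most `2^(m-1) + 1` states
accepts the complement of `L`. -/
theorem complement_upper {α : Type} (L : Language α) (m : ℕ)
    (σ : Type) [Fintype σ] (M : SNFA α σ)
    (hM : M.accepts = L) (hcard : Fintype.card σ = m)
    (hsf : SuffixFree L) :
    NSCle {w | w ∉ L} (2 ^ (m - 1) + 1) := by
  classical
  refine ⟨Option (Set {q : σ // q ≠ M.start}), inferInstance, M.comp, ?_, ?_⟩
  · rw [M.comp_accepts (hM ▸ hsf), hM]
  · have h1 : Fintype.card {q : σ // q ≠ M.start} = m - 1 := by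
      rw [Fintype.card_subtype_compl, Fintype.card_subtype_eq, hcard]
    calc Fintype.card (Option (Set {q : σ // q ≠ M.start}))
        = Fintype.card (Set {q : σ // q ≠ M.start}) + 1 := Fintype.card_option
      _ = 2 ^ Fintype.card {q : σ // q ≠ M.start} + 1 := by rw [Fintype.card_set]
      _ ≤ 2 ^ (m - 1) + 1 := by rw [h1]
end

section
/- Complementation lower bound: for every m ≥ 2 there exists a suffix-free regular language L over the alphabet {a,b,c} such that NSC(L) ≤ m and NSC({a,b,c}* \ L) ≥ 2^{m−1} − 1, i.e., every NFA accepting the complement of L has at least 2^{m−1} − 1 states. -/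
open Computability

namespace ComplAux

variable {α σ : Type}

lemma evalFrom_nil (M : SNFA α σ) (S : Set σ) : M.evalFrom S [] = S := rfl

lemma evalFrom_cons (M : SNFA α σ) (S : Set σ) (a : α) (w : List α) :
    M.evalFrom S (a :: w) = M.evalFrom (M.stepSet S a) w := rfl

lemma evalFrom_append (M : SNFA α σ) (S : Set σ) (u v : List α) :
    M.evalFrom S (u ++ v) = M.evalFrom (M.evalFrom S u) v :=
  List.foldl_append

lemma mem_stepSet (M : SNFA α σ) (S : Set σ) (a : α) (q : σ) :
    q ∈ M.stepSet S a ↔ ∃ p ∈ S, q ∈ M.step p a := by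
  simp [SNFA.stepSet]

lemma stepSet_singleton (M : SNFA α σ) (p : σ) (a : α) :
    M.stepSet {p} a = M.step p a := by
  simp [SNFA.stepSet]

lemma mem_evalFrom (M : SNFA α σ) (w : List α) (S : Set σ) (q : σ) :
    q ∈ M.evalFrom S w ↔ ∃ p ∈ S, q ∈ M.evalFrom {p} w := by
  induction w generalizing S with
  | nil => simp [evalFrom_nil]
  | cons a w ih =>
    rw [evalFrom_cons]
    rw [ih]
    constructor
    · rintro ⟨r, hr, hq⟩
      rw [mem_stepSet] at hr
      obtain ⟨p, hp, hr⟩ := hr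
      refine ⟨p, hp, ?_⟩
      rw [evalFrom_cons, ih]
      refine ⟨r, ?_, hq⟩
      rw [mem_stepSet]
      exact ⟨p, rfl, hr⟩
    · rintro ⟨p, hp, hq⟩
      rw [evalFrom_cons, ih] at hq
      obtain ⟨r, hr, hq⟩ := hq
      rw [mem_stepSet] at hr
      obtain ⟨p', hp', hr⟩ := hr
      simp only [Set.mem_singleton_iff] at hp'
      rw [hp'] at hr
      refine ⟨r, ?_, hq⟩
      rw [mem_stepSet]
      exact ⟨p, hp, hr⟩

lemma evalFrom_union_decomp (M : SNFA α σ) (w : List α) (A B : Set σ) (q : σ) :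
    q ∈ M.evalFrom (A ∪ B) w ↔ q ∈ M.evalFrom A w ∨ q ∈ M.evalFrom B w := by
  rw [mem_evalFrom, mem_evalFrom M w A, mem_evalFrom M w B]
  constructor
  · rintro ⟨p, hp | hp, hq⟩
    · exact Or.inl ⟨p, hp, hq⟩
    · exact Or.inr ⟨p, hp, hq⟩
  · rintro (⟨p, hp, hq⟩ | ⟨p, hp, hq⟩)
    · exact ⟨p, Or.inl hp, hq⟩
    · exact ⟨p, Or.inr hp, hq⟩

lemma stepSet_empty (M : SNFA α σ) (a : α) : M.stepSet ∅ a = ∅ := by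
  simp [SNFA.stepSet]

lemma evalFrom_empty (M : SNFA α σ) (w : List α) : M.evalFrom ∅ w = ∅ := by
  induction w with
  | nil => rfl
  | cons a w ih => rw [evalFrom_cons, stepSet_empty]; exact ih

end ComplAux

set_option linter.unusedSectionVars false
namespace ComplAux2

variable (n : ℕ) [NeZero n]

def Rop (X : Finset (ZMod n)) : Finset (ZMod n) :=
  X.image (· + 1) ∪ (if (0 : ZMod n) ∈ X then {0} else ∅)

inductive RA : Finset (ZMod n) → Prop
  | base : RA {0}
  | rot {X} : RA X → RA (Rop n X)
  | del {X} : RA X → RA (X.erase 0)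

variable {n}

lemma ra_empty : RA n ∅ := by
  have h := RA.del (n := n) RA.base
  simpa using h

lemma mem_image_add_one {X : Finset (ZMod n)} {q : ZMod n} :
    q ∈ X.image (· + 1) ↔ q - 1 ∈ X := by
  simp only [Finset.mem_image]
  constructor
  · rintro ⟨x, hx, rfl⟩; simpa using hx
  · intro h; exact ⟨q - 1, h, by ring⟩

lemma rot_one {X : Finset (ZMod n)} (h : RA n X) : RA n (X.image (· + 1)) := by
  by_cases h0 : (0 : ZMod n) ∈ X
  · by_cases h1 : (0 : ZMod n) ∈ X.image (· + 1)
    · have := RA.rot h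
      have e : Rop n X = X.image (· + 1) := by
        rw [Rop, if_pos h0, Finset.union_eq_left]
        simpa using h1
      rwa [e] at this
    · have h2 := RA.del (RA.rot h)
      have e : (Rop n X).erase 0 = X.image (· + 1) := by
        rw [Rop, if_pos h0, Finset.erase_union_distrib]
        rw [Finset.erase_eq_of_notMem h1]
        simp
      rwa [e] at h2
  · have e : Rop n X = X.image (· + 1) := by
      rw [Rop, if_neg h0, Finset.union_empty]
    have := RA.rot h
    rwa [e] at this

lemma rot_nat {X : Finset (ZMod n)} (h : RA n X) (k : ℕ) :
    RA n (X.image (· + (k : ZMod n))) := by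
  induction k with
  | zero => simpa using h
  | succ k ih =>
    have e : X.image (· + ((k + 1 : ℕ) : ZMod n))
        = (X.image (· + (k : ZMod n))).image (· + 1) := by
      rw [Finset.image_image]
      congr 1
      funext x
      simp only [Function.comp_apply]
      push_cast
      ring
    rw [e]
    exact rot_one ih

lemma rot_any {X : Finset (ZMod n)} (h : RA n X) (d : ZMod n) :
    RA n (X.image (· + d)) := by
  have := rot_nat h d.val
  rwa [ZMod.natCast_val, ZMod.cast_id] at this

lemma del_any {X : Finset (ZMod n)} (h : RA n X) (v : ZMod n) :
    RA n (X.erase v) := by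
  have h1 : RA n (X.image (· + (-v))) := rot_any h (-v)
  have h2 : RA n ((X.image (· + (-v))).erase 0) := RA.del h1
  have e : (X.image (· + (-v))).erase 0 = (X.erase v).image (· + (-v)) := by
    have hinj : Function.Injective (· + (-v) : ZMod n → ZMod n) :=
      add_left_injective _
    rw [Finset.image_erase hinj]
    congr 1
    simp
  rw [e] at h2
  have h3 := rot_any h2 v
  rwa [Finset.image_image, show ((· + v) ∘ (· + (-v)) : ZMod n → ZMod n) = id by
    funext x; simp, Finset.image_id] at h3

lemma ins_below {X : Finset (ZMod n)} (h : RA n X) {t : ZMod n} (ht : t ∈ X) :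
    RA n (insert (t - 1) X) := by
  have h1 : RA n (X.image (· + (-t))) := rot_any h (-t)
  have h0 : (0 : ZMod n) ∈ X.image (· + (-t)) :=
    Finset.mem_image.2 ⟨t, ht, by ring⟩
  have h2 := RA.rot h1
  have e : Rop n (X.image (· + (-t))) = insert (0:ZMod n) ((X.image (· + (-t))).image (· + 1)) := by
    rw [Rop, if_pos h0, Finset.union_comm]
    rw [Finset.insert_eq]
  rw [e] at h2
  have h3 := rot_any h2 (t - 1)
  have e2 : (insert (0:ZMod n) ((X.image (· + (-t))).image (· + 1))).image (· + (t-1))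
      = insert (t - 1) X := by
    rw [Finset.image_insert, Finset.image_image, Finset.image_image]
    congr 1
    · simp
    · have : ((((· + (t-1)) ∘ (· + 1)) ∘ (· + (-t))) : ZMod n → ZMod n) = id := by
        funext x
        simp only [Function.comp_apply, id_eq]
        ring
      rw [this, Finset.image_id]
  rwa [e2] at h3

lemma ins_any {X : Finset (ZMod n)} (h : RA n X) {t : ZMod n} (ht : t ∈ X)
    (s : ZMod n) : RA n (insert s X) := by
  -- induction on the distance (t - s).val
  suffices H : ∀ d : ℕ, ∀ s : ZMod n, t - s = (d : ZMod n) → RA n (insert s X) by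
    exact H (t - s).val s (by rw [ZMod.natCast_val, ZMod.cast_id])
  intro d
  induction d with
  | zero =>
    intro s hs
    have : s = t := by
      have : t - s = 0 := by simpa using hs
      linear_combination -this
    rw [this, Finset.insert_eq_self.2 ht]
    exact h
  | succ d ih =>
    intro s hs
    have hd : t - (s + 1) = (d : ZMod n) := by
      push_cast at hs ⊢
      linear_combination hs
    have h1 : RA n (insert (s + 1) X) := ih (s + 1) hd
    have h2 : RA n (insert ((s+1) - 1) (insert (s+1) X)) :=
      ins_below h1 (Finset.mem_insert_self _ _)
    have e : (s + 1 : ZMod n) - 1 = s := by ring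
    rw [e] at h2
    by_cases hc : s + 1 = s
    · -- degenerate (n = 1): insert (s+1) = insert s
      rw [hc] at h1
      exact h1
    by_cases hmem : s + 1 ∈ X
    · rw [Finset.insert_eq_self.2 hmem] at h2
      exact h2
    · have h3 := del_any h2 (s + 1)
      have e2 : (insert s (insert (s+1) X)).erase (s+1) = insert s X := by
        rw [Finset.erase_insert_of_ne (show s ≠ s + 1 from fun hh => hc hh.symm),
          Finset.erase_insert hmem]
      rwa [e2] at h3

lemma ra_all (S : Finset (ZMod n)) : RA n S := by
  classical
  induction S using Finset.induction_on with
  | empty => exact ra_empty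
  | @insert a s ha ih =>
    rcases s.eq_empty_or_nonempty with rfl | ⟨t, ht⟩
    · -- {a} : rotate {0} by a
      have h := rot_any (RA.base (n := n)) a
      simpa using h
    · exact ins_any ih ht a

end ComplAux2

namespace ComplAux3

open ComplAux ComplAux2

set_option linter.unusedSectionVars false

variable (n : ℕ) [NeZero n]

/-- The witness automaton: a marker `c = 2` from the fresh start state, then an
`n`-state cyclic automaton on letters `0` and `1`. -/
def Mach : SNFA (Fin 3) (Option (ZMod n)) where
  step := fun q x =>
    match q with
    | none => if x = 2 then {some 0} else ∅
    | some s =>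
        if x = 0 then ({some (s + 1)} : Set (Option (ZMod n))) ∪
          (if s = 0 then {some 0} else ∅)
        else if x = 1 then (if s = 0 then ∅ else {some s})
        else ∅
  start := none
  accept := {some 0}

/-- Embedding of a finset of inner states as a set of states. -/
def es (X : Finset (ZMod n)) : Set (Option (ZMod n)) :=
  {q | ∃ s ∈ X, q = some s}

variable {n}

lemma es_zero : es n ({0} : Finset (ZMod n)) = {some 0} := by
  ext q; simp [es]

lemma step_none (x : Fin 3) :
    (Mach n).step none x = if x = 2 then {some 0} else ∅ := rfl

lemma step_some (s : ZMod n) (x : Fin 3) :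
    (Mach n).step (some s) x =
      if x = 0 then ({some (s + 1)} : Set (Option (ZMod n))) ∪
          (if s = 0 then {some 0} else ∅)
      else if x = 1 then (if s = 0 then ∅ else {some s})
      else ∅ := rfl

lemma none_not_mem_step (p : Option (ZMod n)) (x : Fin 3) :
    none ∉ (Mach n).step p x := by
  cases p with
  | none =>
    rw [step_none]
    split_ifs <;> simp
  | some s =>
    rw [step_some]
    split_ifs <;> simp

lemma stepA (X : Finset (ZMod n)) :
    (Mach n).stepSet (es n X) 0 = es n (Rop n X) := by
  ext q
  rw [mem_stepSet]
  constructor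
  · rintro ⟨p, ⟨s, hs, rfl⟩, hq⟩
    rw [step_some] at hq
    rw [if_pos rfl] at hq
    rcases hq with hq | hq
    · refine ⟨s + 1, ?_, hq⟩
      exact Finset.mem_union_left _ (Finset.mem_image.2 ⟨s, hs, rfl⟩)
    · by_cases h0 : s = 0
      · rw [if_pos h0] at hq
        refine ⟨0, ?_, hq⟩
        apply Finset.mem_union_right
        rw [if_pos (h0 ▸ hs)]
        simp
      · rw [if_neg h0] at hq
        exact absurd hq (Set.notMem_empty q)
  · rintro ⟨r, hr, rfl⟩
    rcases Finset.mem_union.1 hr with hr | hr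
    · obtain ⟨s, hs, rfl⟩ := Finset.mem_image.1 hr
      refine ⟨some s, ⟨s, hs, rfl⟩, ?_⟩
      rw [step_some, if_pos rfl]
      exact Set.mem_union_left _ rfl
    · by_cases h0 : (0 : ZMod n) ∈ X
      · rw [if_pos h0] at hr
        simp only [Finset.mem_singleton] at hr
        subst hr
        refine ⟨some 0, ⟨0, h0, rfl⟩, ?_⟩
        rw [step_some, if_pos rfl]
        apply Set.mem_union_right
        rw [if_pos rfl]
        rfl
      · rw [if_neg h0] at hr
        exact absurd hr (Finset.notMem_empty _)

lemma stepB (X : Finset (ZMod n)) :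
    (Mach n).stepSet (es n X) 1 = es n (X.erase 0) := by
  ext q
  rw [mem_stepSet]
  constructor
  · rintro ⟨p, ⟨s, hs, rfl⟩, hq⟩
    rw [step_some] at hq
    rw [if_neg (by decide), if_pos rfl] at hq
    by_cases h0 : s = 0
    · rw [if_pos h0] at hq
      exact absurd hq (Set.notMem_empty q)
    · rw [if_neg h0] at hq
      exact ⟨s, Finset.mem_erase.2 ⟨h0, hs⟩, hq⟩
  · rintro ⟨s, hs, rfl⟩
    obtain ⟨h0, hs⟩ := Finset.mem_erase.1 hs
    refine ⟨some s, ⟨s, hs, rfl⟩, ?_⟩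
    rw [step_some, if_neg (by decide), if_pos rfl, if_neg h0]
    rfl

lemma forward {X : Finset (ZMod n)} (h : RA n X) :
    ∃ w : List (Fin 3), (Mach n).evalFrom {some 0} w = es n X := by
  induction h with
  | base => exact ⟨[], by rw [evalFrom_nil, es_zero]⟩
  | @rot X _ ih =>
    obtain ⟨w, hw⟩ := ih
    refine ⟨w ++ [0], ?_⟩
    rw [evalFrom_append, hw]
    show (Mach n).stepSet (es n X) 0 = _
    exact stepA X
  | @del X _ ih =>
    obtain ⟨w, hw⟩ := ih
    refine ⟨w ++ [1], ?_⟩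
    rw [evalFrom_append, hw]
    show (Mach n).stepSet (es n X) 1 = _
    exact stepB X

/-- `q` (an inner state) accepts the word `w`. -/
def AccW (w : List (Fin 3)) (q : ZMod n) : Prop :=
  ∃ r ∈ (Mach n).accept, r ∈ (Mach n).evalFrom {some q} w

lemma backward {X : Finset (ZMod n)} (h : RA n X) :
    ∃ w : List (Fin 3), ∀ q : ZMod n, AccW (n := n) w q ↔ -q ∈ X := by
  induction h with
  | base =>
    refine ⟨[], fun q => ?_⟩
    unfold AccW
    rw [evalFrom_nil]
    constructor
    · rintro ⟨r, hr, hq⟩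
      simp only [Set.mem_singleton_iff] at hq
      subst hq
      have : some q = some (0 : ZMod n) := hr
      have hq0 : q = 0 := by injection this
      simp [hq0]
    · intro hq
      have hq0 : q = 0 := by simpa [neg_eq_zero] using hq
      subst hq0
      exact ⟨some 0, rfl, rfl⟩
  | @rot X _ ih =>
    obtain ⟨w, hw⟩ := ih
    refine ⟨0 :: w, fun q => ?_⟩
    unfold AccW
    rw [evalFrom_cons, stepSet_singleton, step_some, if_pos rfl]
    have split : ∀ r, r ∈ (Mach n).evalFrom
        (({some (q + 1)} : Set (Option (ZMod n))) ∪ (if q = 0 then {some 0} else ∅)) w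
        ↔ r ∈ (Mach n).evalFrom {some (q + 1)} w ∨
          (q = 0 ∧ r ∈ (Mach n).evalFrom {some (0 : ZMod n)} w) := by
      intro r
      rw [evalFrom_union_decomp]
      by_cases h0 : q = 0
      · rw [if_pos h0]; tauto
      · rw [if_neg h0, evalFrom_empty]; simp [h0]
    constructor
    · rintro ⟨r, hr, hrw⟩
      rcases (split r).1 hrw with h | ⟨hq0, h⟩
      · have : -(q + 1) ∈ X := (hw (q + 1)).1 ⟨r, hr, h⟩
        rw [Rop, Finset.mem_union]
        left
        rw [mem_image_add_one]
        convert this using 1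
        ring
      · rw [Rop, Finset.mem_union]
        right
        have h0X : (0 : ZMod n) ∈ X := by
          have := (hw 0).1 ⟨r, hr, h⟩
          simpa using this
        rw [if_pos h0X]
        simp [hq0]
    · intro hq
      rw [Rop, Finset.mem_union] at hq
      rcases hq with hq | hq
      · rw [mem_image_add_one] at hq
        have : -(q + 1) ∈ X := by convert hq using 1; ring
        obtain ⟨r, hr, h⟩ := (hw (q + 1)).2 this
        exact ⟨r, hr, (split r).2 (Or.inl h)⟩
      · by_cases h0X : (0 : ZMod n) ∈ X
        · rw [if_pos h0X] at hq
          simp only [Finset.mem_singleton, neg_eq_zero] at hq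
          obtain ⟨r, hr, h⟩ := (hw 0).2 (by simpa using h0X)
          exact ⟨r, hr, (split r).2 (Or.inr ⟨hq, h⟩)⟩
        · rw [if_neg h0X] at hq
          exact absurd hq (Finset.notMem_empty _)
  | @del X _ ih =>
    obtain ⟨w, hw⟩ := ih
    refine ⟨1 :: w, fun q => ?_⟩
    unfold AccW
    rw [evalFrom_cons, stepSet_singleton, step_some, if_neg (by decide), if_pos rfl]
    by_cases h0 : q = 0
    · rw [if_pos h0, evalFrom_empty]
      simp only [Set.mem_empty_iff_false, and_false, exists_false, false_iff]
      intro hq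
      exact absurd (Finset.mem_erase.1 hq).1 (by simp [h0])
    · rw [if_neg h0]
      rw [show (∃ r ∈ (Mach n).accept, r ∈ (Mach n).evalFrom {some q} w) ↔ AccW (n := n) w q
        from Iff.rfl, hw q]
      rw [Finset.mem_erase]
      constructor
      · intro h
        exact ⟨by simpa [neg_eq_zero] using h0, h⟩
      · rintro ⟨-, h⟩
        exact h

lemma exists_y (T : Finset (ZMod n)) :
    ∃ w : List (Fin 3), ∀ q : ZMod n, AccW (n := n) w q ↔ q ∉ T := by
  obtain ⟨w, hw⟩ := backward (ra_all (Tᶜ.image (fun x : ZMod n => -x)))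
  refine ⟨w, fun q => ?_⟩
  rw [hw q]
  rw [Finset.mem_image]
  constructor
  · rintro ⟨a, ha, haq⟩
    have : a = q := by
      have := neg_injective haq
      exact this
    subst this
    exact (Finset.mem_compl.1 ha)
  · intro hq
    exact ⟨q, Finset.mem_compl.2 hq, rfl⟩

lemma memb (S T : Finset (ZMod n)) (u w : List (Fin 3))
    (hu : (Mach n).evalFrom {some 0} u = es n S)
    (hw : ∀ q : ZMod n, AccW (n := n) w q ↔ q ∉ T) :
    ((2 : Fin 3) :: (u ++ w)) ∈ (Mach n).accepts ↔ ∃ s ∈ S, s ∉ T := by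
  show (∃ r ∈ (Mach n).accept, r ∈ (Mach n).evalFrom {(Mach n).start} (2 :: (u ++ w))) ↔ _
  have e0 : (Mach n).evalFrom {(Mach n).start} (2 :: (u ++ w))
      = (Mach n).evalFrom (es n S) w := by
    rw [evalFrom_cons, stepSet_singleton]
    show (Mach n).evalFrom ((Mach n).step none 2) (u ++ w) = _
    rw [step_none, if_pos rfl, evalFrom_append, hu]
  rw [e0]
  constructor
  · rintro ⟨r, hr, hrw⟩
    rw [mem_evalFrom] at hrw
    obtain ⟨p, ⟨s, hs, rfl⟩, hrp⟩ := hrw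
    refine ⟨s, hs, ?_⟩
    rw [← hw s]
    exact ⟨r, hr, hrp⟩
  · rintro ⟨s, hs, hsT⟩
    obtain ⟨r, hr, hrp⟩ := (hw s).2 hsT
    refine ⟨r, hr, ?_⟩
    rw [mem_evalFrom]
    exact ⟨some s, ⟨s, hs, rfl⟩, hrp⟩

/-- Every accepted word starts with the marker `2` and contains no further `2`. -/
lemma accepted_shape {w : List (Fin 3)} (h : w ∈ (Mach n).accepts) :
    ∃ v, w = 2 :: v ∧ (2 : Fin 3) ∉ v := by
  obtain ⟨r, hr, hrw⟩ := h
  cases w with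
  | nil =>
    rw [evalFrom_nil] at hrw
    simp only [Set.mem_singleton_iff] at hrw
    subst hrw
    exact absurd hr (by simp [Mach, SNFA.accept])
  | cons x v =>
    rw [evalFrom_cons, stepSet_singleton] at hrw
    by_cases hx : x = 2
    · subst hx
      refine ⟨v, rfl, fun h2 => ?_⟩
      rw [show (Mach n).step (Mach n).start 2 = {some 0} from rfl] at hrw
      -- if 2 ∈ v then evalFrom {some 0} v = ∅
      have key : ∀ (v : List (Fin 3)) (S : Set (Option (ZMod n))), none ∉ S →
          (2 : Fin 3) ∈ v → (Mach n).evalFrom S v = ∅ := by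
        intro v
        induction v with
        | nil => intro S _ h2; exact absurd h2 List.not_mem_nil
        | cons a v ih =>
          intro S hS h2
          rw [evalFrom_cons]
          by_cases ha : a = 2
          · subst ha
            have : (Mach n).stepSet S 2 = ∅ := by
              ext q
              rw [mem_stepSet]
              simp only [Set.mem_empty_iff_false, iff_false, not_exists, not_and]
              intro p hp
              cases p with
              | none => exact absurd hp hS
              | some s =>
                rw [step_some, if_neg (by decide), if_neg (by decide)]
                exact fun hq => hq
            rw [this]
            exact evalFrom_empty _ _
          · have h2' : (2 : Fin 3) ∈ v := by
              rcases List.mem_cons.1 h2 with h | h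
              · exact absurd h.symm ha
              · exact h
            apply ih _ _ h2'
            intro hn
            rw [mem_stepSet] at hn
            obtain ⟨p, _, hp⟩ := hn
            exact none_not_mem_step p a hp
      have := key v {some 0} (by simp) h2
      rw [this] at hrw
      exact absurd hrw (Set.notMem_empty r)
    · rw [show (Mach n).step (Mach n).start x = if x = 2 then {some 0} else ∅ from rfl,
        if_neg hx, evalFrom_empty] at hrw
      exact absurd hrw (Set.notMem_empty r)

end ComplAux3

open ComplAux ComplAux2 ComplAux3 in
/-- **Complementation, lower bound.** For every `m ≥ 2` there is a suffix-free
regular language `L` over the alphabet `{a, b, c}` (encoded as `Fin 3`) such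
that `NSC(L) ≤ m` while every NFA accepting the complement of `L` has at least
`2^(m-1) - 1` states. -/
theorem complement_lower (m : ℕ) (hm : 2 ≤ m) :
    ∃ L : Language (Fin 3), SuffixFree L ∧ NSCle L m ∧
      NSCge {w | w ∉ L} (2 ^ (m - 1) - 1) := by
  classical
  set n := m - 1 with hn
  haveI : NeZero n := ⟨by omega⟩
  refine ⟨(Mach n).accepts, ?_, ?_, ?_⟩
  · -- suffix-free
    intro u v hu hv huv
    obtain ⟨u', hu', hu2⟩ := accepted_shape hu
    obtain ⟨v', hv', hv2⟩ := accepted_shape hv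
    subst hu' hv'
    obtain ⟨t, ht⟩ := huv
    cases t with
    | nil => simpa using ht
    | cons x t' =>
      exfalso
      rw [List.cons_append] at ht
      injection ht with hx hrest
      apply hv2
      rw [← hrest]
      exact List.mem_append_right _ List.mem_cons_self
  · -- NSCle
    refine ⟨Option (ZMod n), inferInstance, Mach n, rfl, ?_⟩
    rw [Fintype.card_option, ZMod.card]
    omega
  · -- NSCge
    intro σ' _ M' hM'
    choose u hu using fun S : Finset (ZMod n) => forward (ra_all S)
    choose y hy using fun T : Finset (ZMod n) => exists_y (n := n) T
    have char : ∀ S T : Finset (ZMod n),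
        ((2 :: u S) ++ y T) ∈ (Mach n).accepts ↔ ∃ s ∈ S, s ∉ T := by
      intro S T
      rw [show ((2 : Fin 3) :: u S) ++ y T = 2 :: (u S ++ y T) from rfl]
      exact memb S T (u S) (y T) (hu S) (hy T)
    have char' : ∀ S T : Finset (ZMod n),
        ((2 :: u S) ++ y T) ∈ M'.accepts ↔ S ⊆ T := by
      intro S T
      rw [hM']
      show (¬ ((2 :: u S) ++ y T) ∈ (Mach n).accepts) ↔ S ⊆ T
      rw [char]
      push_neg
      exact (Finset.subset_iff).symm
    have hsel : ∀ S : Finset (ZMod n), ∃ q,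
        q ∈ M'.evalFrom {M'.start} (2 :: u S) ∧
        ∃ r ∈ M'.accept, r ∈ M'.evalFrom {q} (y S) := by
      intro S
      have hacc : ((2 :: u S) ++ y S) ∈ M'.accepts := (char' S S).2 (subset_refl S)
      obtain ⟨r, hr, hrin⟩ := hacc
      rw [evalFrom_append, mem_evalFrom] at hrin
      obtain ⟨q, hq, hrq⟩ := hrin
      exact ⟨q, hq, r, hr, hrq⟩
    choose f hf1 hf2 using hsel
    have hinj : Function.Injective
        (fun i : {S : Finset (ZMod n) // S.Nonempty} => f i.1) := by
      intro i j hij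
      have hij2 : f i.1 = f j.1 := hij
      by_contra hne
      have hij' : i.1 ≠ j.1 := fun h => hne (Subtype.ext h)
      have c1 : ((2 :: u i.1) ++ y j.1) ∈ M'.accepts := by
        obtain ⟨r, hr, hrq⟩ := hf2 j.1
        refine ⟨r, hr, ?_⟩
        rw [evalFrom_append, mem_evalFrom]
        exact ⟨f i.1, hf1 i.1, by rw [hij2]; exact hrq⟩
      have c2 : ((2 :: u j.1) ++ y i.1) ∈ M'.accepts := by
        obtain ⟨r, hr, hrq⟩ := hf2 i.1
        refine ⟨r, hr, ?_⟩
        rw [evalFrom_append, mem_evalFrom]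
        exact ⟨f j.1, hf1 j.1, by rw [← hij2]; exact hrq⟩
      have h1 : i.1 ⊆ j.1 := (char' i.1 j.1).1 c1
      have h2 : j.1 ⊆ i.1 := (char' j.1 i.1).1 c2
      exact hij' (Finset.Subset.antisymm h1 h2)
    have hcard : Fintype.card {S : Finset (ZMod n) // S.Nonempty} = 2 ^ n - 1 := by
      have e1 : Fintype.card {S : Finset (ZMod n) // S.Nonempty}
          = Fintype.card {S : Finset (ZMod n) // ¬(S = ∅)} :=
        Fintype.card_congr (Equiv.subtypeEquivRight (fun S => by
          simp [Finset.nonempty_iff_ne_empty]))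
      rw [e1, Fintype.card_subtype_compl, Fintype.card_subtype_eq,
        Fintype.card_finset, ZMod.card]
    calc 2 ^ (m - 1) - 1 = Fintype.card {S : Finset (ZMod n) // S.Nonempty} := by
          rw [hcard]
      _ ≤ Fintype.card σ' := Fintype.card_le_of_injective _ hinj
end
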